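/- The function n_p(ρ) = (-κ(ρ) + √(κ(ρ)(κ(ρ) + nλρ)))/(λρ), where κ(ρ) = λρ + σ², is strictly decreasing in ρ on (0, ∞). -/

import Mathlib

lemma np_rewrite (σ2 n x : ℝ) (hσ : 0 < σ2) (hn : 0 < n) (hx : 0 < x) :
    (-(x + σ2) + Real.sqrt ((x + σ2) * ((x + σ2) + n * x))) / x
      = n / (Real.sqrt (1 + n * x / (x + σ2)) + 1) := by
  set κ := x + σ2 with hκdef
  have hκ : 0 < κ := by positivity
  set t := 1 + n * x / κ with htdef
  have ht : 0 < t := by positivity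
  have hκt : κ * t = κ + n * x := by
    rw [htdef, mul_add, mul_one, mul_div_assoc', mul_div_cancel_left₀ _ hκ.ne']
  have hsqrt : Real.sqrt (κ * (κ + n * x)) = κ * Real.sqrt t := by
    have h1 : κ * (κ + n * x) = κ ^ 2 * t := by
      rw [← hκt]; ring
    rw [h1, Real.sqrt_mul (sq_nonneg κ), Real.sqrt_sq hκ.le]
  rw [hsqrt]
  set s := Real.sqrt t with hsdef
  have hs2 : s ^ 2 = t := Real.sq_sqrt ht.le
  have hs0 : 0 ≤ s := Real.sqrt_nonneg t
  have hs1 : (0:ℝ) < s + 1 := by linarith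
  rw [div_eq_div_iff hx.ne' hs1.ne']
  nlinarith [hs2, hκt]

/-- `n_p(ρ) = (-κ(ρ) + √(κ(ρ)(κ(ρ) + nλρ)))/(λρ)`, `κ(ρ) = λρ + σ²`, is strictly decreasing
in `ρ` on `(0, ∞)`. -/
theorem stmt_8 (lam σ2 n : ℝ) (hlam : 0 < lam) (hσ : 0 < σ2) (hn : 0 < n) :
    StrictAntiOn (fun ρ : ℝ =>
      (-(lam * ρ + σ2) + Real.sqrt ((lam * ρ + σ2) * ((lam * ρ + σ2) + n * lam * ρ)))
        / (lam * ρ)) (Set.Ioi 0) := by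
  intro a ha b hb hab
  simp only [Set.mem_Ioi] at ha hb
  have hxa : 0 < lam * a := by positivity
  have hxb : 0 < lam * b := by positivity
  have hmul : n * lam * a = n * (lam * a) := by ring
  have hmulb : n * lam * b = n * (lam * b) := by ring
  simp only [hmul, hmulb, np_rewrite σ2 n (lam * a) hσ hn hxa,
    np_rewrite σ2 n (lam * b) hσ hn hxb]
  have hta : 0 < 1 + n * (lam * a) / (lam * a + σ2) := by positivity
  have hlt : 1 + n * (lam * a) / (lam * a + σ2) < 1 + n * (lam * b) / (lam * b + σ2) := by
    have h2 : n * (lam * a) / (lam * a + σ2) < n * (lam * b) / (lam * b + σ2) := by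
      rw [div_lt_div_iff₀ (by positivity) (by positivity)]
      nlinarith [mul_pos (mul_pos hn hσ) (mul_pos hlam (sub_pos.mpr hab))]
    linarith
  have hssa : Real.sqrt (1 + n * (lam * a) / (lam * a + σ2))
      < Real.sqrt (1 + n * (lam * b) / (lam * b + σ2)) :=
    Real.sqrt_lt_sqrt hta.le hlt
  have hda : 0 < Real.sqrt (1 + n * (lam * a) / (lam * a + σ2)) + 1 := by
    have := Real.sqrt_nonneg (1 + n * (lam * a) / (lam * a + σ2)); linarith
  exact div_lt_div_of_pos_left hn hda (by linarith)
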